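/- If A is an invertible 2×2 integer matrix (an element of GL(2,ℤ)) of finite order, then its order is 1, 2, 3, 4, or 6. -/

import Mathlib

lemma ch2 (M : Matrix (Fin 2) (Fin 2) ℤ) :
    M * M = (Matrix.trace M) • M - (M.det) • 1 := by
  ext i j
  simp only [Matrix.sub_apply, Matrix.smul_apply, smul_eq_mul, Matrix.mul_apply,
    Fin.sum_univ_two, Matrix.trace_fin_two, Matrix.det_fin_two, Matrix.one_apply]
  fin_cases i <;> fin_cases j <;> simp <;> ring

lemma trace_bound (B : GL (Fin 2) ℤ) (hB : IsOfFinOrder B) :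
    |Matrix.trace (B : Matrix (Fin 2) (Fin 2) ℤ)| ≤ 2 := by
  by_contra hlt
  push_neg at hlt
  set M : Matrix (Fin 2) (Fin 2) ℤ := (B : Matrix (Fin 2) (Fin 2) ℤ) with hMdef
  set t : ℤ := Matrix.trace M with ht
  set d : ℤ := M.det with hd
  have hdu : IsUnit d := (Matrix.isUnit_iff_isUnit_det M).mp B.isUnit
  have hd1 : |d| = 1 := by
    rcases Int.isUnit_iff.mp hdu with h | h <;> simp [h]
  set s : ℕ → ℤ := fun k => Matrix.trace (M ^ k) with hs
  have hrec : ∀ k, s (k + 2) = t * s (k + 1) - d * s k := by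
    intro k
    have : M ^ (k + 2) = t • M ^ (k + 1) - d • M ^ k := by
      have h1 : M ^ (k + 2) = M ^ k * (M * M) := by rw [pow_add, pow_two]
      rw [h1, ch2 M, mul_sub, mul_smul_comm, mul_smul_comm, mul_one, ← pow_succ, ← ht, ← hd]
    simp only [hs, this, Matrix.trace_sub, Matrix.trace_smul, smul_eq_mul]
  have hs0 : s 0 = 2 := by simp [hs]
  have hs1 : s 1 = t := by simp [hs, ht]
  have hgrow : ∀ k : ℕ, (2 + (k : ℤ) ≤ |s k|) ∧ |s k| < |s (k + 1)| := by
    intro k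
    induction k with
    | zero => constructor <;> simp [hs0, hs1] <;> omega
    | succ k ih =>
      obtain ⟨ih1, ih2⟩ := ih
      have h1 : 2 + ((k : ℤ) + 1) ≤ |s (k + 1)| := by omega
      refine ⟨by exact_mod_cast h1, ?_⟩
      have hr := hrec k
      have habs : |t * s (k + 1)| - |d * s k| ≤ |s (k + 2)| := by
        rw [hr]; exact abs_sub_abs_le_abs_sub _ _
      rw [abs_mul, abs_mul, hd1, one_mul] at habs
      nlinarith [abs_nonneg (s (k+1))]
  have hn : 0 < orderOf B := hB.orderOf_pos
  have hsn : s (orderOf B) = 2 := by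
    have h1 : M ^ (orderOf B) = 1 := by
      have h := congrArg Units.val (pow_orderOf_eq_one B)
      simpa only [Units.val_pow_eq_pow_val, Units.val_one] using h
    simp [hs, h1]
  have := (hgrow (orderOf B)).1
  rw [hsn, abs_two] at this
  omega

lemma unip (M N : Matrix (Fin 2) (Fin 2) ℤ) (h : M = 1 + N) (hN : N * N = 0) :
    ∀ k : ℕ, M ^ k = 1 + (k : ℤ) • N := by
  intro k
  induction k with
  | zero => simp
  | succ k ih =>
    rw [pow_succ, ih, h]
    have hx : (1 + (k:ℤ) • N) * (1 + N) = 1 + N + (k:ℤ) • N + (k:ℤ) • (N * N) := by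
      simp only [mul_add, add_mul, one_mul, mul_one, smul_mul_assoc]
      abel
    rw [hx, hN, smul_zero, add_zero]
    push_cast
    module

/-- Crystallographic restriction: an element of `GL(2, ℤ)` of finite order
has order `1`, `2`, `3`, `4`, or `6`. -/
theorem crystallographic_restriction_GL2
    (A : GL (Fin 2) ℤ) (hA : IsOfFinOrder A) :
    orderOf A ∈ ({1, 2, 3, 4, 6} : Set ℕ) := by
  have h0 : 0 < orderOf A := hA.orderOf_pos
  set M : Matrix (Fin 2) (Fin 2) ℤ := (A : Matrix (Fin 2) (Fin 2) ℤ) with hMdef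
  obtain ⟨t, ht⟩ : ∃ t, Matrix.trace M = t := ⟨_, rfl⟩
  obtain ⟨d, hd⟩ : ∃ d, M.det = d := ⟨_, rfl⟩
  have hM2 : M * M = t • M - d • 1 := by rw [← ht, ← hd]; exact ch2 M
  have ht2 : |t| ≤ 2 := by rw [← ht]; exact trace_bound A hA
  have hdu : d = 1 ∨ d = -1 := by
    rw [← hd]
    exact Int.isUnit_iff.mp ((Matrix.isUnit_iff_isUnit_det M).mp A.isUnit)
  have hMn : M ^ (orderOf A) = 1 := by
    have h := congrArg Units.val (pow_orderOf_eq_one A)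
    simpa only [Units.val_pow_eq_pow_val, Units.val_one] using h
  -- key claim: M ^ 6 = 1 or M ^ 4 = 1
  have key : M ^ 6 = 1 ∨ M ^ 4 = 1 := by
    have hcases : t = -2 ∨ t = -1 ∨ t = 0 ∨ t = 1 ∨ t = 2 := by
      have := abs_le.mp ht2; omega
    rcases hdu with hd1 | hd1
    · -- det = 1
      rw [hd1, one_smul] at hM2
      rcases hcases with rfl | rfl | rfl | rfl | rfl
      · -- t = -2 : M = -1
        have hN : (M + 1) * (M + 1) = 0 := by
          rw [show (M + 1) * (M + 1) = M * M + M + M + 1 from by noncomm_ring, hM2]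
          module
        have hP : M * M = 1 + (-2 : ℤ) • (M + 1) := by rw [hM2]; module
        have hQ : ((-2 : ℤ) • (M + 1)) * ((-2 : ℤ) • (M + 1)) = 0 := by
          rw [smul_mul_assoc, mul_smul_comm, hN]; simp
        have hpow := unip (M * M) _ hP hQ (orderOf A)
        have hsq : (M * M) ^ (orderOf A) = 1 := by
          rw [← pow_two, ← pow_mul, mul_comm, pow_mul, hMn, one_pow]
        rw [hpow] at hsq
        have hz : ((orderOf A : ℤ)) • ((-2 : ℤ) • (M + 1)) = 0 := by
          have h' := hsq
          rwa [add_eq_left] at h'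
        right
        have hQ0 : (-2 : ℤ) • (M + 1) = 0 := by
          rcases smul_eq_zero.mp hz with h | h
          · exact absurd h (by exact_mod_cast h0.ne')
          · exact h
        have hMeq : M + 1 = 0 := by
          rcases smul_eq_zero.mp hQ0 with h | h
          · norm_num at h
          · exact h
        have hM1 : M = -1 := by
          have := hMeq
          linear_combination (norm := noncomm_ring) this
        rw [hM1, show (4 : ℕ) = 2 * 2 from rfl, pow_mul, neg_one_sq, one_pow]
      · -- t = -1 : M ^ 3 = 1
        left
        have hM2' : M * M = -M - 1 := by rw [hM2]; module
        have h3 : M ^ 3 = 1 := by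
          have : M ^ 3 = (M * M) * M := by rw [pow_succ, pow_two]
          rw [this, hM2', sub_mul, neg_mul, hM2']
          noncomm_ring
        rw [show (6 : ℕ) = 3 * 2 from rfl, pow_mul, h3, one_pow]
      · -- t = 0 : M ^ 2 = -1
        right
        have hM2' : M * M = -1 := by rw [hM2]; module
        rw [show (4 : ℕ) = 2 * 2 from rfl, pow_mul, pow_two M, hM2', neg_one_sq]
      · -- t = 1 : M ^ 3 = -1
        left
        have hM2' : M * M = M - 1 := by rw [hM2]; module
        have h3 : M ^ 3 = -1 := by
          have : M ^ 3 = (M * M) * M := by rw [pow_succ, pow_two]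
          rw [this, hM2', sub_mul, one_mul, hM2']
          noncomm_ring
        rw [show (6 : ℕ) = 3 * 2 from rfl, pow_mul, h3]
        noncomm_ring
      · -- t = 2 : M = 1
        left
        have hN : (M - 1) * (M - 1) = 0 := by
          rw [show (M - 1) * (M - 1) = M * M - M - M + 1 from by noncomm_ring, hM2]
          module
        have hP : M = 1 + (M - 1) := by abel
        have hpow := unip M _ hP hN (orderOf A)
        rw [hMn] at hpow
        have hz : ((orderOf A : ℤ)) • (M - 1) = 0 := by
          have := hpow.symm
          rwa [add_eq_left] at this
        have hM1 : M - 1 = 0 := by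
          rcases smul_eq_zero.mp hz with h | h
          · exfalso; have : (orderOf A : ℤ) ≠ 0 := by exact_mod_cast h0.ne'
            exact this h
          · exact h
        have : M = 1 := by rwa [sub_eq_zero] at hM1
        rw [this, one_pow]
    · -- det = -1
      rw [hd1] at hM2
      have hM2' : M * M = t • M + 1 := by rw [hM2]; module
      have hcontr : ∀ u : ℤ, M.trace = u → M * M = u • M + 1 → u * u + 2 > 2 → False := by
        intro u htu hMu hgt
        have hfin : IsOfFinOrder (A ^ 2) := hA.pow
        have hb := trace_bound (A ^ 2) hfin
        have hval : ((A ^ 2 : GL (Fin 2) ℤ) : Matrix (Fin 2) (Fin 2) ℤ) = M * M := by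
          rw [Units.val_pow_eq_pow_val, pow_two]
        rw [hval, hMu] at hb
        rw [Matrix.trace_add, Matrix.trace_smul, Matrix.trace_one, htu, smul_eq_mul] at hb
        simp only [Fintype.card_fin, Nat.cast_ofNat] at hb
        rw [abs_le] at hb
        omega
      rcases hcases with rfl | rfl | rfl | rfl | rfl
      · exact absurd (hcontr _ ht hM2' (by norm_num)) not_false
      · exact absurd (hcontr _ ht hM2' (by norm_num)) not_false
      · right
        have hM20 : M * M = 1 := by rw [hM2']; module
        rw [show (4 : ℕ) = 2 * 2 from rfl, pow_mul, pow_two M, hM20, one_pow]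
      · exact absurd (hcontr _ ht hM2' (by norm_num)) not_false
      · exact absurd (hcontr _ ht hM2' (by norm_num)) not_false
  -- conclude
  have hdvd : orderOf A ∣ 6 ∨ orderOf A ∣ 4 := by
    rcases key with h | h
    · left
      apply orderOf_dvd_of_pow_eq_one
      exact Units.ext (by simpa [Units.val_pow_eq_pow_val] using h)
    · right
      apply orderOf_dvd_of_pow_eq_one
      exact Units.ext (by simpa [Units.val_pow_eq_pow_val] using h)
  simp only [Set.mem_insert_iff, Set.mem_singleton_iff]
  set n := orderOf A with hn
  clear_value n
  rcases hdvd with h | h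
  · have hle : n ≤ 6 := Nat.le_of_dvd (by norm_num) h
    interval_cases n <;> omega
  · have hle : n ≤ 4 := Nat.le_of_dvd (by norm_num) h
    interval_cases n <;> omega
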